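/- arXiv:math/0504527 — 3 statements merged into one kernel-verified Lean document; each statement's English description precedes it below -/
import Mathlib

section
/- Let c_1,...,c_m ≤ 0 be real numbers, extended to c_1,...,c_{2m} by c_{m+i} = c_i. Let h be a symmetric real 2m×2m matrix, and write indices ī = m+i. Then ∑_{i,j=1}^{2m} c_i h_{ij}^2 - 2 ∑_{i,j=1}^{m} c_i (h_{i j̄} h_{ī j} - h_{ij} h_{ī j̄}) ≤ 0. Moreover, if all c_i < 0, equality holds if and only if h_{ij} = -h_{ī j̄} and h_{i j̄} = h_{ī j} for all 1 ≤ i, j ≤ m. -/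
open Finset

/-- Let `c 0, …, c (m-1) ≤ 0` be real numbers, extended by
`c (m+i) = c i`, and let `h` be a symmetric real `2m × 2m` matrix (indices `0,…,2m-1`,
with `ī = m+i`).  Then
`∑_{i,j<2m} c i h i j ^ 2 - 2 ∑_{i,j<m} c i (h i (m+j) * h (m+i) j - h i j * h (m+i) (m+j)) ≤ 0`.
Moreover, if all `c i < 0`, equality holds iff `h i j = - h (m+i) (m+j)` and
`h i (m+j) = h (m+i) j` for all `i, j < m`. -/
theorem kahler_nonpos_ricci_algebraic_inequality
    (m : ℕ) (c : ℕ → ℝ) (h : ℕ → ℕ → ℝ)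
    (hsym : ∀ i j, h i j = h j i)
    (hext : ∀ i < m, c (m + i) = c i)
    (hc : ∀ i < m, c i ≤ 0) :
    (∑ i ∈ range (2 * m), ∑ j ∈ range (2 * m), c i * (h i j) ^ 2
        - 2 * ∑ i ∈ range m, ∑ j ∈ range m,
            c i * (h i (m + j) * h (m + i) j - h i j * h (m + i) (m + j)) ≤ 0)
      ∧ ((∀ i < m, c i < 0) →
          ((∑ i ∈ range (2 * m), ∑ j ∈ range (2 * m), c i * (h i j) ^ 2
              - 2 * ∑ i ∈ range m, ∑ j ∈ range m,
                  c i * (h i (m + j) * h (m + i) j - h i j * h (m + i) (m + j)) = 0)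
            ↔ (∀ i < m, ∀ j < m,
                h i j = - h (m + i) (m + j) ∧ h i (m + j) = h (m + i) j))) := by
  have hsplit : ∀ f : ℕ → ℝ, ∑ i ∈ range (2 * m), f i
      = ∑ i ∈ range m, (f i + f (m + i)) := by
    intro f
    rw [two_mul, Finset.sum_range_add, ← Finset.sum_add_distrib]
  have key :
      (∑ i ∈ range (2 * m), ∑ j ∈ range (2 * m), c i * (h i j) ^ 2
          - 2 * ∑ i ∈ range m, ∑ j ∈ range m,
              c i * (h i (m + j) * h (m + i) j - h i j * h (m + i) (m + j)))
        = ∑ i ∈ range m, ∑ j ∈ range m,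
            c i * ((h i j + h (m + i) (m + j)) ^ 2
              + (h i (m + j) - h (m + i) j) ^ 2) := by
    rw [hsplit, Finset.mul_sum, ← Finset.sum_sub_distrib]
    refine Finset.sum_congr rfl fun i hi => ?_
    rw [hsplit, hsplit, ← Finset.sum_add_distrib, Finset.mul_sum,
      ← Finset.sum_sub_distrib]
    refine Finset.sum_congr rfl fun j hj => ?_
    rw [hext i (mem_range.mp hi)]
    ring
  constructor
  · rw [key]
    refine Finset.sum_nonpos fun i hi => Finset.sum_nonpos fun j hj => ?_
    exact mul_nonpos_of_nonpos_of_nonneg (hc i (mem_range.mp hi)) (by positivity)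
  · intro hlt
    rw [key]
    have h1 : ∀ i ∈ range m,
        (∑ j ∈ range m, c i * ((h i j + h (m + i) (m + j)) ^ 2
          + (h i (m + j) - h (m + i) j) ^ 2)) ≤ 0 := fun i hi =>
      Finset.sum_nonpos fun j hj =>
        mul_nonpos_of_nonpos_of_nonneg (hc i (mem_range.mp hi)) (by positivity)
    rw [Finset.sum_eq_zero_iff_of_nonpos h1]
    constructor
    · intro H i hi j hj
      have H2 := (Finset.sum_eq_zero_iff_of_nonpos fun j hj =>
        mul_nonpos_of_nonpos_of_nonneg (hc i hi) (by positivity)).mp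
          (H i (mem_range.mpr hi)) j (mem_range.mpr hj)
      have hci := hlt i hi
      have hz : (h i j + h (m + i) (m + j)) ^ 2
          + (h i (m + j) - h (m + i) j) ^ 2 = 0 := by
        rcases mul_eq_zero.mp H2 with h1 | h2
        · exact absurd h1 (ne_of_lt hci)
        · exact h2
      constructor
      · nlinarith [sq_nonneg (h i j + h (m + i) (m + j)),
          sq_nonneg (h i (m + j) - h (m + i) j)]
      · nlinarith [sq_nonneg (h i j + h (m + i) (m + j)),
          sq_nonneg (h i (m + j) - h (m + i) j)]
    · intro H i hi
      refine Finset.sum_eq_zero fun j hj => ?_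
      obtain ⟨e1, e2⟩ := H i (mem_range.mp hi) j (mem_range.mp hj)
      rw [e1, e2]
      ring
end

section
/- Let c_1,...,c_m ≥ 0 with c_{m+i} = c_i, and let h be a symmetric real 2m×2m matrix with ī = m+i. Then ∑_{i,j=1}^{2m} c_i h_{ij}^2 + 2 ∑_{i,j=1}^{m} c_i (h_{i j̄} h_{ī j} - h_{ij} h_{ī j̄}) ≥ 0, with equality when all c_i > 0 if and only if h_{ij} = h_{ī j̄} and h_{i j̄} = -h_{ī j} for all 1 ≤ i, j ≤ m (i.e., h is Hermitian with respect to the complex structure J e_i = e_{ī}). -/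
open Finset

lemma key_identity (m : ℕ) (c : ℕ → ℝ) (h : ℕ → ℕ → ℝ)
    (hext : ∀ i < m, c (m + i) = c i) :
    ∑ i ∈ range (2 * m), ∑ j ∈ range (2 * m), c i * (h i j) ^ 2
        + 2 * ∑ i ∈ range m, ∑ j ∈ range m,
            c i * (h i (m + j) * h (m + i) j - h i j * h (m + i) (m + j))
    = ∑ i ∈ range m, ∑ j ∈ range m,
        c i * ((h i j - h (m + i) (m + j)) ^ 2 + (h i (m + j) + h (m + i) j) ^ 2) := by
  rw [two_mul]
  simp_rw [Finset.sum_range_add, Finset.mul_sum, ← Finset.sum_add_distrib]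
  refine Finset.sum_congr rfl fun i hi => Finset.sum_congr rfl fun j hj => ?_
  rw [hext i (mem_range.mp hi)]
  ring

/-- Let `c 0, …, c (m-1) ≥ 0` with `c (m+i) = c i`, and let `h` be a
symmetric real `2m × 2m` matrix with `ī = m+i`.  Then
`∑_{i,j<2m} c i h i j ^ 2 + 2 ∑_{i,j<m} c i (h i (m+j) * h (m+i) j - h i j * h (m+i) (m+j)) ≥ 0`,
and if all `c i > 0`, equality holds iff `h i j = h (m+i) (m+j)` and
`h i (m+j) = - h (m+i) j` for all `i, j < m` (i.e. `h` is Hermitian with respect to the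
complex structure `J e_i = e_{ī}`). -/
theorem kahler_nonneg_ricci_algebraic_inequality
    (m : ℕ) (c : ℕ → ℝ) (h : ℕ → ℕ → ℝ)
    (hsym : ∀ i j, h i j = h j i)
    (hext : ∀ i < m, c (m + i) = c i)
    (hc : ∀ i < m, 0 ≤ c i) :
    (0 ≤ ∑ i ∈ range (2 * m), ∑ j ∈ range (2 * m), c i * (h i j) ^ 2
        + 2 * ∑ i ∈ range m, ∑ j ∈ range m,
            c i * (h i (m + j) * h (m + i) j - h i j * h (m + i) (m + j)))
      ∧ ((∀ i < m, 0 < c i) →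
          ((∑ i ∈ range (2 * m), ∑ j ∈ range (2 * m), c i * (h i j) ^ 2
              + 2 * ∑ i ∈ range m, ∑ j ∈ range m,
                  c i * (h i (m + j) * h (m + i) j - h i j * h (m + i) (m + j)) = 0)
            ↔ (∀ i < m, ∀ j < m,
                h i j = h (m + i) (m + j) ∧ h i (m + j) = - h (m + i) j))) := by
  rw [key_identity m c h hext]
  have hnn : ∀ i ∈ range m, 0 ≤ ∑ j ∈ range m,
      c i * ((h i j - h (m + i) (m + j)) ^ 2 + (h i (m + j) + h (m + i) j) ^ 2) := by
    intro i hi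
    refine Finset.sum_nonneg fun j hj => mul_nonneg (hc i (mem_range.mp hi)) (by positivity)
  have hnn' : ∀ i ∈ range m, ∀ j ∈ range m, 0 ≤
      c i * ((h i j - h (m + i) (m + j)) ^ 2 + (h i (m + j) + h (m + i) j) ^ 2) := by
    intro i hi j hj
    exact mul_nonneg (hc i (mem_range.mp hi)) (by positivity)
  refine ⟨Finset.sum_nonneg hnn, fun hpos => ?_⟩
  rw [Finset.sum_eq_zero_iff_of_nonneg hnn]
  constructor
  · intro H i hi j hj
    have := (Finset.sum_eq_zero_iff_of_nonneg (hnn' i (mem_range.mpr hi))).mp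
      (H i (mem_range.mpr hi)) j (mem_range.mpr hj)
    have hci := hpos i hi
    have hsum : (h i j - h (m + i) (m + j)) ^ 2 + (h i (m + j) + h (m + i) j) ^ 2 = 0 := by
      rcases mul_eq_zero.mp this with h0 | h0
      · exact absurd h0 hci.ne'
      · exact h0
    have ha : (h i j - h (m + i) (m + j)) ^ 2 = 0 :=
      le_antisymm (by nlinarith [sq_nonneg (h i (m + j) + h (m + i) j)]) (sq_nonneg _)
    have hb : (h i (m + j) + h (m + i) j) ^ 2 = 0 :=
      le_antisymm (by nlinarith [sq_nonneg (h i j - h (m + i) (m + j))]) (sq_nonneg _)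
    have ha' := sub_eq_zero.mp (pow_eq_zero_iff two_ne_zero |>.mp ha)
    have hb' := pow_eq_zero_iff two_ne_zero |>.mp hb
    exact ⟨ha', by linarith⟩
  · intro H i hi
    refine Finset.sum_eq_zero fun j hj => ?_
    obtain ⟨h1, h2⟩ := H i (mem_range.mp hi) j (mem_range.mp hj)
    rw [h1, h2]; ring
end

section
/- Let (M, g) be a Riemannian manifold with spin^c structure whose auxiliary line bundle has curvature F, and let σ₀ be a nonzero parallel spin^c spinor. Then for every k, ∑_l R_{kl} e_l · σ₀ = ∑_l F_{kl} e_l · σ₀, where R_{kl} is the Ricci curvature. In particular, if the spin^c structure comes from a spin structure (F = 0), then the metric is Ricci-flat. -/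
open scoped BigOperators

/-- Setting as in the curvature identity for parallel spin^c spinors:
`∑_{i,j} R_{klij} e_i e_j·σ₀ = 2 F_{kl} σ₀`.  Contracting with `e_l` via the Clifford
relations and the first Bianchi identity gives `∑_l Ric_{kl} e_l·σ₀ = ∑_l F_{kl} e_l·σ₀`,
where `Ric_{kl} = ∑_j R_{kjlj}`.  In particular, if the spin^c structure comes from a spin
structure (`F = 0`), then (since the `e_l·σ₀` are linearly independent for `σ₀ ≠ 0`) the
metric is Ricci-flat. -/
theorem parallel_spinc_ricci_identity
    {n : ℕ} {M : Type*} {S : Type*} [NormedAddCommGroup S] [InnerProductSpace ℂ S]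
    (cm : M → Fin n → S →ₗ[ℂ] S)
    (cliff : ∀ (x : M) (i j : Fin n) (s : S),
      cm x i (cm x j s) + cm x j (cm x i s) = (-2 : ℂ) • (if i = j then s else 0))
    (R : M → Fin n → Fin n → Fin n → Fin n → ℝ)
    (hanti1 : ∀ x i j k l, R x i j k l = - R x j i k l)
    (hanti2 : ∀ x i j k l, R x i j k l = - R x i j l k)
    (hpair : ∀ x i j k l, R x i j k l = R x k l i j)
    (hbianchi : ∀ x k l i j, R x k l i j + R x k i j l + R x k j l i = 0)
    (F : M → Fin n → Fin n → ℂ)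
    (σ₀ : M → S) (hσ₀ : ∀ x, σ₀ x ≠ 0)
    (curv_id : ∀ (x : M) (k l : Fin n),
      ∑ i : Fin n, ∑ j : Fin n, R x k l i j • cm x i (cm x j (σ₀ x))
        = (2 * F x k l) • σ₀ x)
    (hindep : ∀ x : M, LinearIndependent ℂ (fun l : Fin n => cm x l (σ₀ x))) :
    (∀ (x : M) (k : Fin n),
        ∑ l : Fin n, (∑ j : Fin n, R x k j l j) • cm x l (σ₀ x)
          = ∑ l : Fin n, F x k l • cm x l (σ₀ x))
    ∧ ((∀ x k l, F x k l = 0) →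
        ∀ (x : M) (k l : Fin n), (∑ j : Fin n, R x k j l j) = 0) := by
  have rsmul : ∀ (r : ℝ) (s : S), r • s = (r : ℂ) • s := fun r s =>
    (algebraMap_smul ℂ r s).symm
  have hRii : ∀ x k l i, R x k l i i = 0 := by
    intro x k l i; have h := hanti2 x k l i i; linarith
  have tswap : ∀ f : Fin n → Fin n → Fin n → S,
      ∑ a : Fin n, ∑ b : Fin n, ∑ d : Fin n, f a b d
        = ∑ b : Fin n, ∑ d : Fin n, ∑ a : Fin n, f a b d := by
    intro f
    rw [Finset.sum_comm]
    exact Finset.sum_congr rfl fun b _ => Finset.sum_comm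
  have main : ∀ (x : M) (k : Fin n),
      ∑ l : Fin n, (∑ j : Fin n, R x k j l j) • cm x l (σ₀ x)
        = ∑ l : Fin n, F x k l • cm x l (σ₀ x) := by
    intro x k
    have ac : ∀ (i j : Fin n) (s : S),
        cm x i (cm x j s) = -(cm x j (cm x i s)) - (2:ℂ) • (if i = j then s else 0) := by
      intro i j s
      have h2 : cm x i (cm x j s) = (-2:ℂ) • (if i = j then s else 0) - cm x j (cm x i s) :=
        eq_sub_of_add_eq (cliff x i j s)
      rw [h2, neg_smul]
      abel
    have cyc1 : ∀ l i j : Fin n,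
        cm x i (cm x j (cm x l (σ₀ x)))
          = cm x l (cm x i (cm x j (σ₀ x)))
            + (2:ℂ) • (if i = l then cm x j (σ₀ x) else 0)
            - (2:ℂ) • (if j = l then cm x i (σ₀ x) else 0) := by
      intro l i j
      rw [ac j l (σ₀ x), map_sub, map_neg, map_smul, ac i l (cm x j (σ₀ x)),
        apply_ite (cm x i), map_zero]
      abel
    have cyc2 : ∀ l i j : Fin n,
        cm x j (cm x l (cm x i (σ₀ x)))
          = cm x l (cm x i (cm x j (σ₀ x)))
            + (2:ℂ) • (if i = j then cm x l (σ₀ x) else 0)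
            - (2:ℂ) • (if j = l then cm x i (σ₀ x) else 0) := by
      intro l i j
      rw [ac j l (cm x i (σ₀ x)), ac j i (σ₀ x), map_sub, map_neg, map_smul,
        apply_ite (cm x l), map_zero]
      have h : (if j = i then cm x l (σ₀ x) else 0) = (if i = j then cm x l (σ₀ x) else 0) := by
        simp [eq_comm]
      rw [h]
      abel
    have e1 : ∀ l i j : Fin n,
        R x k l i j • cm x i (cm x j (cm x l (σ₀ x)))
          = R x k l i j • cm x l (cm x i (cm x j (σ₀ x)))
            + R x k l i j • ((2:ℂ) • (if i = l then cm x j (σ₀ x) else 0))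
            - R x k l i j • ((2:ℂ) • (if j = l then cm x i (σ₀ x) else 0)) := by
      intro l i j
      rw [cyc1 l i j, smul_sub, smul_add]
    have e2 : ∀ l i j : Fin n,
        R x k l i j • cm x j (cm x l (cm x i (σ₀ x)))
          = R x k l i j • cm x l (cm x i (cm x j (σ₀ x)))
            + R x k l i j • ((2:ℂ) • (if i = j then cm x l (σ₀ x) else 0))
            - R x k l i j • ((2:ℂ) • (if j = l then cm x i (σ₀ x) else 0)) := by
      intro l i j
      rw [cyc2 l i j, smul_sub, smul_add]
    have hA : (∑ l : Fin n, ∑ i : Fin n, ∑ j : Fin n,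
          R x k l i j • cm x l (cm x i (cm x j (σ₀ x))))
        = ∑ l : Fin n, (2 * F x k l) • cm x l (σ₀ x) := by
      refine Finset.sum_congr rfl fun l _ => ?_
      have h := congrArg (cm x l) (curv_id x k l)
      simp only [map_sum, LinearMap.map_smul_of_tower, map_smul] at h
      exact h
    have hZ : ∑ l : Fin n, ∑ i : Fin n, ∑ j : Fin n,
        (R x k l i j + R x k i j l + R x k j l i) • cm x l (cm x i (cm x j (σ₀ x))) = 0 := by
      simp [hbianchi]
    have hsplit : (∑ l : Fin n, ∑ i : Fin n, ∑ j : Fin n,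
          R x k l i j • cm x l (cm x i (cm x j (σ₀ x))))
        + (∑ l : Fin n, ∑ i : Fin n, ∑ j : Fin n,
          R x k i j l • cm x l (cm x i (cm x j (σ₀ x))))
        + (∑ l : Fin n, ∑ i : Fin n, ∑ j : Fin n,
          R x k j l i • cm x l (cm x i (cm x j (σ₀ x)))) = 0 := by
      rw [← hZ]
      simp only [add_smul, Finset.sum_add_distrib]
    have hB : (∑ l : Fin n, ∑ i : Fin n, ∑ j : Fin n,
          R x k i j l • cm x l (cm x i (cm x j (σ₀ x))))
        = ∑ l : Fin n, ∑ i : Fin n, ∑ j : Fin n,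
          R x k l i j • cm x j (cm x l (cm x i (σ₀ x))) :=
      tswap (fun a b d => R x k b d a • cm x a (cm x b (cm x d (σ₀ x))))
    have hC : (∑ l : Fin n, ∑ i : Fin n, ∑ j : Fin n,
          R x k j l i • cm x l (cm x i (cm x j (σ₀ x))))
        = ∑ l : Fin n, ∑ i : Fin n, ∑ j : Fin n,
          R x k l i j • cm x i (cm x j (cm x l (σ₀ x))) := by
      have h1 := tswap (fun a b d => R x k d a b • cm x a (cm x b (cm x d (σ₀ x))))
      have h2 := tswap (fun p q r => R x k q r p • cm x r (cm x p (cm x q (σ₀ x))))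
      exact h1.trans h2
    rw [hB, hC] at hsplit
    simp only [e1, e2] at hsplit
    simp only [Finset.sum_add_distrib, Finset.sum_sub_distrib] at hsplit
    have hD1 : (∑ l : Fin n, ∑ i : Fin n, ∑ j : Fin n,
          R x k l i j • ((2:ℂ) • (if i = j then cm x l (σ₀ x) else 0))) = 0 := by
      refine Finset.sum_eq_zero fun l _ => Finset.sum_eq_zero fun i _ => ?_
      rw [Finset.sum_eq_single i (fun b _ hb => by rw [if_neg (Ne.symm hb), smul_zero, smul_zero])
        (fun h => absurd (Finset.mem_univ i) h)]
      rw [if_pos rfl, hRii, zero_smul]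
    have hD2 : (∑ l : Fin n, ∑ i : Fin n, ∑ j : Fin n,
          R x k l i j • ((2:ℂ) • (if j = l then cm x i (σ₀ x) else 0)))
        = ∑ i : Fin n, (∑ l : Fin n, R x k l i l) • ((2:ℂ) • cm x i (σ₀ x)) := by
      have h1 : ∀ l i : Fin n, (∑ j : Fin n,
            R x k l i j • ((2:ℂ) • (if j = l then cm x i (σ₀ x) else 0)))
          = R x k l i l • ((2:ℂ) • cm x i (σ₀ x)) := by
        intro l i
        rw [Finset.sum_eq_single l (fun b _ hb => by rw [if_neg hb, smul_zero, smul_zero])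
          (fun h => absurd (Finset.mem_univ l) h)]
        rw [if_pos rfl]
      simp only [h1]
      rw [Finset.sum_comm]
      exact Finset.sum_congr rfl fun i _ => (Finset.sum_smul).symm
    have hD3 : (∑ l : Fin n, ∑ i : Fin n, ∑ j : Fin n,
          R x k l i j • ((2:ℂ) • (if i = l then cm x j (σ₀ x) else 0)))
        = -∑ i : Fin n, (∑ l : Fin n, R x k l i l) • ((2:ℂ) • cm x i (σ₀ x)) := by
      have h1 : ∀ l : Fin n, (∑ i : Fin n, ∑ j : Fin n,
            R x k l i j • ((2:ℂ) • (if i = l then cm x j (σ₀ x) else 0)))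
          = ∑ j : Fin n, R x k l l j • ((2:ℂ) • cm x j (σ₀ x)) := by
        intro l
        rw [Finset.sum_eq_single l
          (fun b _ hb => Finset.sum_eq_zero fun j _ => by rw [if_neg hb, smul_zero, smul_zero])
          (fun h => absurd (Finset.mem_univ l) h)]
        exact Finset.sum_congr rfl fun j _ => by rw [if_pos rfl]
      simp only [h1]
      have h2 : ∀ l j : Fin n, R x k l l j • ((2:ℂ) • cm x j (σ₀ x))
          = -(R x k l j l • ((2:ℂ) • cm x j (σ₀ x))) := by
        intro l j
        rw [hanti2 x k l l j, neg_smul]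
      simp only [h2, Finset.sum_neg_distrib]
      rw [neg_inj, Finset.sum_comm]
      exact Finset.sum_congr rfl fun j _ => (Finset.sum_smul).symm
    rw [hD1, hD2, hD3] at hsplit
    set A := ∑ l : Fin n, ∑ i : Fin n, ∑ j : Fin n,
      R x k l i j • cm x l (cm x i (cm x j (σ₀ x))) with hAdef
    set Wv := ∑ i : Fin n, (∑ l : Fin n, R x k l i l) • ((2:ℂ) • cm x i (σ₀ x)) with hWdef
    have h0 : (3:ℂ) • A - (3:ℂ) • Wv = 0 := by
      rw [← hsplit]
      module
    have hAW : A = Wv :=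
      smul_right_injective S (by norm_num : (3:ℂ) ≠ 0) (sub_eq_zero.mp h0)
    have h2 : (2:ℂ) • (∑ l : Fin n, (∑ j : Fin n, R x k j l j) • cm x l (σ₀ x))
        = (2:ℂ) • (∑ l : Fin n, F x k l • cm x l (σ₀ x)) := by
      rw [Finset.smul_sum, Finset.smul_sum]
      calc ∑ l : Fin n, (2:ℂ) • (∑ j : Fin n, R x k j l j) • cm x l (σ₀ x)
          = ∑ i : Fin n, (∑ l : Fin n, R x k l i l) • ((2:ℂ) • cm x i (σ₀ x)) :=
            Finset.sum_congr rfl fun l _ => smul_comm _ _ _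
        _ = Wv := hWdef.symm
        _ = A := hAW.symm
        _ = ∑ l : Fin n, (2 * F x k l) • cm x l (σ₀ x) := hA
        _ = ∑ l : Fin n, (2:ℂ) • F x k l • cm x l (σ₀ x) :=
            Finset.sum_congr rfl fun l _ => (smul_smul _ _ _).symm
    exact smul_right_injective S (by norm_num : (2:ℂ) ≠ 0) h2
  refine ⟨main, fun hF x k l => ?_⟩
  have h1 := main x k
  simp only [hF, zero_smul, Finset.sum_const_zero] at h1
  have h2 : ∑ l : Fin n, (((∑ j : Fin n, R x k j l j : ℝ) : ℂ)) • cm x l (σ₀ x) = 0 := by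
    rw [← h1]
    exact Finset.sum_congr rfl fun l _ => (rsmul _ _).symm
  have h3 := Fintype.linearIndependent_iff.mp (hindep x)
    (fun l => ((∑ j : Fin n, R x k j l j : ℝ) : ℂ)) h2 l
  exact_mod_cast h3
end
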